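/- For all f, f* ∈ C[0,α₀] and all η ∈ [0,α₀], one has |E₁(η,f) − E₁(η,f*)| ≤ Ē₁(α₀)·‖f − f*‖, where Ē₁(α₀) = (α₀·a/L₁ₘ)·(N̄₁·α₀^{μ+1}/(μ+1) + L̄₁·N₁ᴹ·α₀^{2μ−ν+1}/(L₁ₘ·(2μ−ν+1))). -/

import Mathlib

open Real Set Filter MeasureTheory Topology

noncomputable section

/-- Sup norm on `C[0,α₀]`. -/
def supIcc (α₀ : ℝ) (g : ℝ → ℝ) : ℝ := ⨆ η : Icc (0:ℝ) α₀, |g η.1|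

/-- `E₁(η,f) = exp(−α₀·a·∫₀^η N*(f)(s)/L*(f)(s) ds)`. -/
def E1 (α₀ a : ℝ) (Lstar Nstar : (ℝ → ℝ) → ℝ → ℝ) (f : ℝ → ℝ) (η : ℝ) : ℝ :=
  Real.exp (-(α₀ * a * ∫ s in (0:ℝ)..η, Nstar f s / Lstar f s))

lemma exp_lip_aux {u v : ℝ} (hu : u ≤ 0) (hv : v ≤ 0) :
    |Real.exp u - Real.exp v| ≤ |u - v| := by
  wlog h : v ≤ u generalizing u v
  · rw [abs_sub_comm, abs_sub_comm u v]; exact this hv hu (le_of_not_ge h)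
  have h1 := Real.add_one_le_exp (v - u)
  have h2 : Real.exp u ≤ 1 := Real.exp_le_one_iff.2 hu
  rw [abs_of_nonneg (sub_nonneg.2 (Real.exp_le_exp.2 h)), abs_of_nonneg (sub_nonneg.2 h)]
  have h3 : Real.exp v = Real.exp u * Real.exp (v - u) := by
    rw [← Real.exp_add]; ring_nf
  nlinarith [Real.exp_pos u, Real.exp_pos (v - u)]

theorem statement4
    (α₀ a μ ν L1m L1M N1m N1M Lbar1 Nbar1 : ℝ)
    (hα₀ : 0 < α₀) (ha : 0 < a)
    (hμpos : 0 < μ) (hνpos : 0 < ν) (hL1m : 0 < L1m) (hL1M : 0 < L1M)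
    (hN1m : 0 < N1m) (hN1M : 0 < N1M) (hLbar1 : 0 < Lbar1) (hNbar1 : 0 < Nbar1)
    (hμ : max 1 ν < μ) (hLmM : L1m ≤ L1M) (hNmM : N1m ≤ N1M)
    (Lstar Nstar : (ℝ → ℝ) → ℝ → ℝ)
    (hLcont : ∀ f : ℝ → ℝ, ContinuousOn f (Icc 0 α₀) → ContinuousOn (Lstar f) (Ioc 0 α₀))
    (hNcont : ∀ f : ℝ → ℝ, ContinuousOn f (Icc 0 α₀) → ContinuousOn (Nstar f) (Ioc 0 α₀))
    (hLbd : ∀ f : ℝ → ℝ, ContinuousOn f (Icc 0 α₀) → ∀ η ∈ Ioc (0:ℝ) α₀,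
      L1m * η ^ (-μ) ≤ Lstar f η ∧ Lstar f η ≤ L1M * η ^ (-μ))
    (hNbd : ∀ f : ℝ → ℝ, ContinuousOn f (Icc 0 α₀) → ∀ η ∈ Ioc (0:ℝ) α₀,
      N1m * η ^ (-ν) ≤ Nstar f η ∧ Nstar f η ≤ N1M * η ^ (-ν))
    (hLlip : ∀ f fs : ℝ → ℝ, ContinuousOn f (Icc 0 α₀) → ContinuousOn fs (Icc 0 α₀) →
      ∀ η ∈ Ioc (0:ℝ) α₀,
        |Lstar f η - Lstar fs η| ≤ Lbar1 * supIcc α₀ (fun x => f x - fs x))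
    (hNlip : ∀ f fs : ℝ → ℝ, ContinuousOn f (Icc 0 α₀) → ContinuousOn fs (Icc 0 α₀) →
      ∀ η ∈ Ioc (0:ℝ) α₀,
        |Nstar f η - Nstar fs η| ≤ Nbar1 * supIcc α₀ (fun x => f x - fs x))
    (hint : ∀ f : ℝ → ℝ, ContinuousOn f (Icc 0 α₀) → ∀ η ∈ Icc (0:ℝ) α₀,
      IntervalIntegrable (fun s => Nstar f s / Lstar f s) volume 0 η)
    (f fs : ℝ → ℝ) (hf : ContinuousOn f (Icc 0 α₀)) (hfs : ContinuousOn fs (Icc 0 α₀))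
    (η : ℝ) (hη : η ∈ Icc (0:ℝ) α₀) :
    |E1 α₀ a Lstar Nstar f η - E1 α₀ a Lstar Nstar fs η| ≤
      (α₀ * a / L1m) * (Nbar1 * α₀ ^ (μ + 1) / (μ + 1) +
          Lbar1 * N1M * α₀ ^ (2 * μ - ν + 1) / (L1m * (2 * μ - ν + 1))) *
        supIcc α₀ (fun x => f x - fs x) := by
  obtain ⟨hη0, hηα⟩ := hη
  set d := supIcc α₀ (fun x => f x - fs x) with hdd
  have hd0 : 0 ≤ d := Real.iSup_nonneg fun i => abs_nonneg _
  have hμ1 : 1 < μ := lt_of_le_of_lt (le_max_left _ _) hμ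
  have hνμ : ν < μ := lt_of_le_of_lt (le_max_right _ _) hμ
  have hp1 : (0:ℝ) < μ + 1 := by linarith
  have hp2 : (0:ℝ) < 2 * μ - ν + 1 := by linarith
  have hq2 : (0:ℝ) < 2 * μ - ν := by linarith
  have hintf := hint f hf η ⟨hη0, hηα⟩
  have hintfs := hint fs hfs η ⟨hη0, hηα⟩
  set If := ∫ s in (0:ℝ)..η, Nstar f s / Lstar f s with hIf
  set Ifs := ∫ s in (0:ℝ)..η, Nstar fs s / Lstar fs s with hIfs
  -- nonnegativity of the integrals
  have hIpos : ∀ (g : ℝ → ℝ), ContinuousOn g (Icc 0 α₀) →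
      0 ≤ ∫ s in (0:ℝ)..η, Nstar g s / Lstar g s := by
    intro g hg
    apply intervalIntegral.integral_nonneg_of_ae_restrict hη0
    rw [show volume.restrict (Icc (0:ℝ) η) = volume.restrict (Ioc (0:ℝ) η) from
      Measure.restrict_congr_set Ioc_ae_eq_Icc.symm]
    refine ae_restrict_of_forall_mem measurableSet_Ioc (fun s hs => ?_)
    have hs' : s ∈ Ioc (0:ℝ) α₀ := ⟨hs.1, hs.2.trans hηα⟩
    have hL := (hLbd g hg s hs').1
    have hN := (hNbd g hg s hs').1
    have hsμ : (0:ℝ) < s ^ (-μ) := rpow_pos_of_pos hs.1 _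
    have hsν : (0:ℝ) < s ^ (-ν) := rpow_pos_of_pos hs.1 _
    exact div_nonneg (le_trans (by positivity) hN) (le_trans (by positivity) hL)
  -- Step 1 : Lipschitz bound on exp
  have step1 : |E1 α₀ a Lstar Nstar f η - E1 α₀ a Lstar Nstar fs η| ≤
      (α₀ * a) * |If - Ifs| := by
    have h1 : -(α₀ * a * If) ≤ 0 :=
      neg_nonpos.2 (mul_nonneg (by positivity) (hIpos f hf))
    have h2 : -(α₀ * a * Ifs) ≤ 0 :=
      neg_nonpos.2 (mul_nonneg (by positivity) (hIpos fs hfs))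
    have := exp_lip_aux h1 h2
    calc |E1 α₀ a Lstar Nstar f η - E1 α₀ a Lstar Nstar fs η|
        ≤ |(-(α₀ * a * If)) - (-(α₀ * a * Ifs))| := this
      _ = (α₀ * a) * |If - Ifs| := by
          rw [show (-(α₀ * a * If)) - (-(α₀ * a * Ifs)) = (α₀ * a) * (Ifs - If) by ring,
            abs_mul, abs_of_pos (by positivity), abs_sub_comm]
  -- the dominating function
  set c1 : ℝ := Nbar1 * d / L1m with hc1
  set c2 : ℝ := Lbar1 * N1M * d / (L1m * L1m) with hc2
  have hc1nn : 0 ≤ c1 := by positivity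
  have hc2nn : 0 ≤ c2 := by positivity
  have hg1int : IntervalIntegrable (fun s : ℝ => c1 * s ^ μ) volume 0 η :=
    (intervalIntegral.intervalIntegrable_rpow' (by linarith)).const_mul _
  have hg2int : IntervalIntegrable (fun s : ℝ => c2 * s ^ (2 * μ - ν)) volume 0 η :=
    (intervalIntegral.intervalIntegrable_rpow' (by linarith)).const_mul _
  have hgint : IntervalIntegrable (fun s : ℝ => c1 * s ^ μ + c2 * s ^ (2 * μ - ν)) volume 0 η :=
    hg1int.add hg2int
  -- pointwise bound
  have hpt : ∀ s ∈ Set.uIoc (0:ℝ) η,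
      ‖Nstar f s / Lstar f s - Nstar fs s / Lstar fs s‖ ≤
        c1 * s ^ μ + c2 * s ^ (2 * μ - ν) := by
    intro s hs
    rw [Set.uIoc_of_le hη0] at hs
    have hs' : s ∈ Ioc (0:ℝ) α₀ := ⟨hs.1, hs.2.trans hηα⟩
    have hs0 : (0:ℝ) < s := hs.1
    have hsμ : (0:ℝ) < s ^ μ := rpow_pos_of_pos hs0 _
    have hsν : (0:ℝ) < s ^ ν := rpow_pos_of_pos hs0 _
    have hnegμ : s ^ (-μ) = (s ^ μ)⁻¹ := rpow_neg hs0.le μ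
    have hnegν : s ^ (-ν) = (s ^ ν)⁻¹ := rpow_neg hs0.le ν
    have hsplit : s ^ (2 * μ - ν) = s ^ μ * s ^ μ / s ^ ν := by
      rw [show (2 : ℝ) * μ - ν = μ + μ - ν by ring, rpow_sub hs0, rpow_add hs0]
    have hLf := (hLbd f hf s hs').1
    have hLfs := (hLbd fs hfs s hs').1
    have hNfsub := (hNbd fs hfs s hs').2
    have hNfslb := (hNbd fs hfs s hs').1
    have hNlipc := hNlip f fs hf hfs s hs'
    have hLlipc := hLlip f fs hf hfs s hs'
    rw [← hdd] at hNlipc hLlipc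
    have hLfpos : 0 < Lstar f s := lt_of_lt_of_le (by positivity) hLf
    have hLfspos : 0 < Lstar fs s := lt_of_lt_of_le (by positivity) hLfs
    have hNfspos : 0 < Nstar fs s := lt_of_lt_of_le (by positivity) hNfslb
    have key : Nstar f s / Lstar f s - Nstar fs s / Lstar fs s =
        (Nstar f s - Nstar fs s) / Lstar f s +
          (Nstar fs s * (Lstar fs s - Lstar f s)) / (Lstar f s * Lstar fs s) := by
      field_simp
      ring
    rw [Real.norm_eq_abs, key]
    refine le_trans (abs_add_le _ _) (add_le_add ?_ ?_)
    · -- first term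
      rw [abs_div, abs_of_pos hLfpos]
      have hbd : |Nstar f s - Nstar fs s| / Lstar f s ≤ (Nbar1 * d) / (L1m * s ^ (-μ)) :=
        div_le_div₀ (by positivity) hNlipc (by positivity) hLf
      refine hbd.trans (le_of_eq ?_)
      rw [hc1, hnegμ]
      field_simp
    · -- second term
      rw [abs_div, abs_of_pos (by positivity : (0:ℝ) < Lstar f s * Lstar fs s), abs_mul,
        abs_of_pos hNfspos]
      have hnum : Nstar fs s * |Lstar fs s - Lstar f s| ≤ N1M * s ^ (-ν) * (Lbar1 * d) := by
        have := abs_sub_comm (Lstar fs s) (Lstar f s)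
        rw [this]
        exact mul_le_mul hNfsub hLlipc (abs_nonneg _) (by positivity)
      have hden : L1m * s ^ (-μ) * (L1m * s ^ (-μ)) ≤ Lstar f s * Lstar fs s :=
        mul_le_mul hLf hLfs (by positivity) hLfpos.le
      have hbd := div_le_div₀ (by positivity) hnum (by positivity) hden
      refine hbd.trans (le_of_eq ?_)
      rw [hc2, hnegμ, hnegν, hsplit]
      field_simp
  -- Step 2 : bound the integral difference
  have step2 : |If - Ifs| ≤ c1 * η ^ (μ + 1) / (μ + 1) + c2 * η ^ (2 * μ - ν + 1) / (2 * μ - ν + 1) := by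
    have hsub : If - Ifs = ∫ s in (0:ℝ)..η,
        (Nstar f s / Lstar f s - Nstar fs s / Lstar fs s) := by
      rw [hIf, hIfs, intervalIntegral.integral_sub hintf hintfs]
    have hle := intervalIntegral.norm_integral_le_of_norm_le
      (μ := volume) (a := (0:ℝ)) (b := η)
      (f := fun s => Nstar f s / Lstar f s - Nstar fs s / Lstar fs s)
      (g := fun s => c1 * s ^ μ + c2 * s ^ (2 * μ - ν))
      hη0 (Filter.Eventually.of_forall fun t ht => hpt t (by rwa [Set.uIoc_of_le hη0])) hgint
    have hintval : (∫ s in (0:ℝ)..η, (c1 * s ^ μ + c2 * s ^ (2 * μ - ν))) =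
        c1 * η ^ (μ + 1) / (μ + 1) + c2 * η ^ (2 * μ - ν + 1) / (2 * μ - ν + 1) := by
      rw [intervalIntegral.integral_add hg1int hg2int,
        intervalIntegral.integral_const_mul, intervalIntegral.integral_const_mul,
        integral_rpow (Or.inl (by linarith)), integral_rpow (Or.inl (by linarith)),
        Real.zero_rpow (by positivity : μ + 1 ≠ 0),
        Real.zero_rpow (by positivity : 2 * μ - ν + 1 ≠ 0)]
      ring
    rw [hsub]
    calc |∫ s in (0:ℝ)..η, (Nstar f s / Lstar f s - Nstar fs s / Lstar fs s)|
        ≤ |∫ s in (0:ℝ)..η, (c1 * s ^ μ + c2 * s ^ (2 * μ - ν))| := by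
          rw [Real.norm_eq_abs] at hle; exact hle.trans (le_abs_self _)
      _ = c1 * η ^ (μ + 1) / (μ + 1) + c2 * η ^ (2 * μ - ν + 1) / (2 * μ - ν + 1) := by
          rw [hintval, abs_of_nonneg]
          have h1 : (0:ℝ) ≤ η ^ (μ + 1) := rpow_nonneg hη0 _
          have h2 : (0:ℝ) ≤ η ^ (2 * μ - ν + 1) := rpow_nonneg hη0 _
          positivity
  -- Step 3 : monotonicity in η and final algebra
  have hmon1 : η ^ (μ + 1) ≤ α₀ ^ (μ + 1) := rpow_le_rpow hη0 hηα hp1.le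
  have hmon2 : η ^ (2 * μ - ν + 1) ≤ α₀ ^ (2 * μ - ν + 1) := rpow_le_rpow hη0 hηα hp2.le
  have step3 : |If - Ifs| ≤
      c1 * α₀ ^ (μ + 1) / (μ + 1) + c2 * α₀ ^ (2 * μ - ν + 1) / (2 * μ - ν + 1) := by
    refine step2.trans (add_le_add ?_ ?_)
    · exact (div_le_div_iff_of_pos_right hp1).2 (mul_le_mul_of_nonneg_left hmon1 hc1nn)
    · exact (div_le_div_iff_of_pos_right hp2).2 (mul_le_mul_of_nonneg_left hmon2 hc2nn)
  calc |E1 α₀ a Lstar Nstar f η - E1 α₀ a Lstar Nstar fs η|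
      ≤ (α₀ * a) * |If - Ifs| := step1
    _ ≤ (α₀ * a) * (c1 * α₀ ^ (μ + 1) / (μ + 1) +
          c2 * α₀ ^ (2 * μ - ν + 1) / (2 * μ - ν + 1)) :=
        mul_le_mul_of_nonneg_left step3 (by positivity)
    _ = (α₀ * a / L1m) * (Nbar1 * α₀ ^ (μ + 1) / (μ + 1) +
          Lbar1 * N1M * α₀ ^ (2 * μ - ν + 1) / (L1m * (2 * μ - ν + 1))) * d := by
        rw [hc1, hc2]
        field_simp
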